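/- Let s ≤ T, let B be a constant symmetric positive definite N×N real matrix, let K : ℝ → Matrix (Fin N) (Fin N) ℝ be continuous on [s,T] with each K(τ) symmetric positive semidefinite, and let P : ℝ → Matrix (Fin N) (Fin N) ℝ satisfy the matrix ODE P'(τ) = −B · K(τ) · P(τ) for τ ∈ [s,T] with P(s) = 1 (identity). Then: (i) ∫_{s}^{T} K(τ) · P(τ) dτ = B⁻¹ · (1 − P(T)); and (ii) for every h ∈ ℝ^N, hᵀ (∫_{s}^{T} P(τ)ᵀ K(τ) P(τ) dτ) h = (1/2)·( hᵀ B⁻¹ h − (P(T).mulVec h)ᵀ B⁻¹ (P(T).mulVec h) ). -/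

import Mathlib

open MeasureTheory Matrix

/-- Explicit formulas for the training displacement operator and the cumulative dissipation
Gramian under a quadratic loss with constant positive definite Hessian `B`:
(i) `∫_s^T K(τ) P(τ) dτ = B⁻¹ (1 − P(T))`;
(ii) `hᵀ (∫_s^T P(τ)ᵀ K(τ) P(τ) dτ) h = ½ (hᵀ B⁻¹ h − (P(T)h)ᵀ B⁻¹ (P(T)h))`. -/
theorem displacement_and_dissipation_formulas {N : ℕ} (s T : ℝ) (hsT : s ≤ T)
    (B : Matrix (Fin N) (Fin N) ℝ) (hBsymm : B.IsSymm) (hBpd : B.PosDef)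
    (K : ℝ → Matrix (Fin N) (Fin N) ℝ)
    (hKcont : ∀ i j, ContinuousOn (fun τ => K τ i j) (Set.Icc s T))
    (hKsymm : ∀ τ ∈ Set.Icc s T, (K τ).IsSymm)
    (hKpsd : ∀ τ ∈ Set.Icc s T, (K τ).PosSemidef)
    (P : ℝ → Matrix (Fin N) (Fin N) ℝ)
    (hP : ∀ τ ∈ Set.Icc s T, ∀ i j,
      HasDerivAt (fun u => P u i j) ((-(B * K τ * P τ)) i j) τ)
    (hPs : P s = 1) :
    (Matrix.of fun i j => ∫ τ in s..T, (K τ * P τ) i j) = B⁻¹ * (1 - P T)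
      ∧ ∀ h : Fin N → ℝ,
        h ⬝ᵥ (Matrix.of fun i j => ∫ τ in s..T, ((P τ)ᵀ * K τ * P τ) i j).mulVec h
          = (1 / 2) * (h ⬝ᵥ B⁻¹.mulVec h
              - (P T).mulVec h ⬝ᵥ B⁻¹.mulVec ((P T).mulVec h)) := by
  have hIcc : Set.uIcc s T = Set.Icc s T := Set.uIcc_of_le hsT
  have hBdet : IsUnit B.det := hBpd.det_pos.ne'.isUnit
  have hB1 : B⁻¹ * B = 1 := Matrix.nonsing_inv_mul B hBdet
  have hBinvsymm : B⁻¹ᵀ = B⁻¹ := by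
    rw [Matrix.transpose_nonsing_inv, hBsymm.eq]
  -- continuity of P entries
  have hPcont : ∀ i j, ContinuousOn (fun τ => P τ i j) (Set.Icc s T) :=
    fun i j τ hτ => (hP τ hτ i j).continuousAt.continuousWithinAt
  -- continuity of (B * K τ * P τ) entries
  have hMc : ∀ i j, ContinuousOn (fun τ => (B * K τ * P τ) i j) (Set.Icc s T) := by
    intro i j
    simp only [Matrix.mul_apply]
    exact continuousOn_finset_sum _ fun l _ =>
      (continuousOn_finset_sum _ fun k _ => continuousOn_const.mul (hKcont k l)).mul
        (hPcont l j)
  have hMint : ∀ i j, IntervalIntegrable (fun τ => (-(B * K τ * P τ)) i j) volume s T := by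
    intro i j
    apply ContinuousOn.intervalIntegrable
    rw [hIcc]
    simpa only [Matrix.neg_apply, Pi.neg_def] using (hMc i j).neg
  have hFTC : ∀ i j, ∫ τ in s..T, (-(B * K τ * P τ)) i j = P T i j - P s i j := by
    intro i j
    exact intervalIntegral.integral_eq_sub_of_hasDerivAt
      (fun τ hτ => hP τ (hIcc ▸ hτ) i j) (hMint i j)
  -- the key dot product identity
  have hkey : ∀ v w : Fin N → ℝ, (B *ᵥ v) ⬝ᵥ (B⁻¹ *ᵥ w) = v ⬝ᵥ w := by
    intro v w
    rw [dotProduct_comm, Matrix.dotProduct_mulVec]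
    have : (B⁻¹ *ᵥ w) ᵥ* B = w := by
      rw [← Matrix.vecMul_transpose, hBinvsymm, Matrix.vecMul_vecMul, hB1,
        Matrix.vecMul_one]
    rw [this, dotProduct_comm]
  have hsymmdot : ∀ x y : Fin N → ℝ, x ⬝ᵥ B⁻¹ *ᵥ y = y ⬝ᵥ B⁻¹ *ᵥ x := by
    intro x y
    rw [Matrix.dotProduct_mulVec]
    conv_lhs => rw [← hBinvsymm, Matrix.vecMul_transpose]
    rw [dotProduct_comm]
  constructor
  · -- part (i)
    ext i j
    simp only [Matrix.of_apply]
    have hrw : ∀ τ : ℝ, (K τ * P τ) i j = ∑ k, B⁻¹ i k * -((-(B * K τ * P τ)) k j) := by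
      intro τ
      have h2 : K τ * P τ = B⁻¹ * (B * K τ * P τ) := by
        rw [Matrix.mul_assoc B, ← Matrix.mul_assoc B⁻¹, hB1, Matrix.one_mul]
      rw [h2]
      simp [Matrix.mul_apply, Matrix.neg_apply]
    calc ∫ τ in s..T, (K τ * P τ) i j
        = ∫ τ in s..T, ∑ k, B⁻¹ i k * -((-(B * K τ * P τ)) k j) := by
          simp_rw [hrw]
      _ = ∑ k, ∫ τ in s..T, B⁻¹ i k * -((-(B * K τ * P τ)) k j) := by
          apply intervalIntegral.integral_finset_sum
          intro k _
          exact ((hMint k j).neg).const_mul _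
      _ = ∑ k, B⁻¹ i k * -(P T k j - P s k j) := by
          refine Finset.sum_congr rfl fun k _ => ?_
          rw [intervalIntegral.integral_const_mul, intervalIntegral.integral_neg, hFTC]
      _ = (B⁻¹ * (1 - P T)) i j := by
          rw [hPs]
          simp only [Matrix.mul_apply, Matrix.sub_apply]
          exact Finset.sum_congr rfl fun k _ => by ring
  · -- part (ii)
    intro h
    set g : ℝ → Fin N → ℝ := fun τ => P τ *ᵥ h with hg
    set q : ℝ → ℝ := fun τ => g τ ⬝ᵥ B⁻¹ *ᵥ g τ with hq
    set f : ℝ → ℝ := fun τ => h ⬝ᵥ ((P τ)ᵀ * K τ * P τ) *ᵥ h with hf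
    -- derivative of g entries
    have hgd : ∀ τ ∈ Set.Icc s T, ∀ i,
        HasDerivAt (fun u => g u i) (((-(B * K τ * P τ)) *ᵥ h) i) τ := by
      intro τ hτ i
      simp only [hg, Matrix.mulVec, dotProduct]
      exact HasDerivAt.fun_sum fun j _ => (hP τ hτ i j).mul_const (h j)
    -- f in terms of g
    have hfg : ∀ τ, f τ = g τ ⬝ᵥ K τ *ᵥ g τ := by
      intro τ
      have h1 : ((P τ)ᵀ * K τ * P τ) *ᵥ h = (P τ)ᵀ *ᵥ (K τ *ᵥ (P τ *ᵥ h)) := by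
        simp [Matrix.mulVec_mulVec, Matrix.mul_assoc]
      simp only [hf, hg, h1]
      rw [Matrix.dotProduct_mulVec, Matrix.vecMul_transpose]
    -- derivative of q
    have hqd : ∀ τ ∈ Set.Icc s T, HasDerivAt q (-2 * f τ) τ := by
      intro τ hτ
      have hd : HasDerivAt q
          (((-(B * K τ * P τ)) *ᵥ h) ⬝ᵥ B⁻¹ *ᵥ g τ
            + g τ ⬝ᵥ B⁻¹ *ᵥ ((-(B * K τ * P τ)) *ᵥ h)) τ := by
        have hform : q = fun u => ∑ i, g u i * ∑ j, B⁻¹ i j * g u j := by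
          funext u
          simp [hq, dotProduct, Matrix.mulVec]
        have hval : ((-(B * K τ * P τ)) *ᵥ h) ⬝ᵥ B⁻¹ *ᵥ g τ
              + g τ ⬝ᵥ B⁻¹ *ᵥ ((-(B * K τ * P τ)) *ᵥ h)
            = ∑ i, (((-(B * K τ * P τ)) *ᵥ h) i * ∑ j, B⁻¹ i j * g τ j
                + g τ i * ∑ j, B⁻¹ i j * ((-(B * K τ * P τ)) *ᵥ h) j) := by
          rw [Finset.sum_add_distrib]
          simp [dotProduct, Matrix.mulVec]
        rw [hform, hval]
        exact HasDerivAt.fun_sum fun i _ => ((hgd τ hτ i).mul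
          (HasDerivAt.fun_sum fun j _ => (hgd τ hτ j).const_mul (B⁻¹ i j)))
      have hval : ((-(B * K τ * P τ)) *ᵥ h) ⬝ᵥ B⁻¹ *ᵥ g τ
            + g τ ⬝ᵥ B⁻¹ *ᵥ ((-(B * K τ * P τ)) *ᵥ h) = -2 * f τ := by
        have hMv : (-(B * K τ * P τ)) *ᵥ h = -(B *ᵥ (K τ *ᵥ g τ)) := by
          rw [Matrix.neg_mulVec, Matrix.mulVec_mulVec, Matrix.mulVec_mulVec,
            Matrix.mul_assoc]
        rw [hsymmdot (g τ), hMv, neg_dotProduct, hkey, hfg]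
        have : K τ *ᵥ g τ ⬝ᵥ g τ = g τ ⬝ᵥ K τ *ᵥ g τ := by
          rw [dotProduct_comm]
        rw [this]; ring
      rw [← hval]; exact hd
    -- continuity / integrability of f
    have hEc : ∀ i j, ContinuousOn (fun τ => ((P τ)ᵀ * K τ * P τ) i j) (Set.Icc s T) := by
      intro i j
      simp only [Matrix.mul_apply, Matrix.transpose_apply]
      exact continuousOn_finset_sum _ fun l _ =>
        (continuousOn_finset_sum _ fun k _ => (hPcont k i).mul (hKcont k l)).mul (hPcont l j)
    have hEint : ∀ i j, IntervalIntegrable (fun τ => ((P τ)ᵀ * K τ * P τ) i j) volume s T := by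
      intro i j
      apply ContinuousOn.intervalIntegrable
      rw [hIcc]; exact hEc i j
    have hfc : ContinuousOn f (Set.Icc s T) := by
      simp only [hf, dotProduct, Matrix.mulVec]
      exact continuousOn_finset_sum _ fun i _ =>
        continuousOn_const.mul (continuousOn_finset_sum _ fun j _ => (hEc i j).mul
          continuousOn_const)
    have hfint : IntervalIntegrable f volume s T := by
      apply ContinuousOn.intervalIntegrable; rw [hIcc]; exact hfc
    have hfint2 : IntervalIntegrable (fun τ => -2 * f τ) volume s T := hfint.const_mul _
    have hFTC2 : ∫ τ in s..T, -2 * f τ = q T - q s :=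
      intervalIntegral.integral_eq_sub_of_hasDerivAt
        (fun τ hτ => hqd τ (hIcc ▸ hτ)) hfint2
    have hintf : ∫ τ in s..T, f τ = (q s - q T) / 2 := by
      rw [intervalIntegral.integral_const_mul] at hFTC2
      linarith
    -- LHS equals ∫ f
    have hcont2 : ∀ i, ContinuousOn
        (fun τ => h i * ∑ j, ((P τ)ᵀ * K τ * P τ) i j * h j) (Set.Icc s T) := by
      intro i
      exact continuousOn_const.mul (continuousOn_finset_sum _ fun j _ =>
        (hEc i j).mul continuousOn_const)
    have hint2 : ∀ i, IntervalIntegrable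
        (fun τ => h i * ∑ j, ((P τ)ᵀ * K τ * P τ) i j * h j) volume s T := by
      intro i
      apply ContinuousOn.intervalIntegrable
      rw [hIcc]; exact hcont2 i
    have hLHS : h ⬝ᵥ (Matrix.of fun i j => ∫ τ in s..T, ((P τ)ᵀ * K τ * P τ) i j).mulVec h
        = ∫ τ in s..T, f τ := by
      simp only [dotProduct, Matrix.mulVec, Matrix.of_apply]
      have step1 : ∀ i, ∑ j, (∫ τ in s..T, ((P τ)ᵀ * K τ * P τ) i j) * h j
          = ∫ τ in s..T, ∑ j, ((P τ)ᵀ * K τ * P τ) i j * h j := by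
        intro i
        rw [intervalIntegral.integral_finset_sum (fun j _ => (hEint i j).mul_const (h j))]
        exact Finset.sum_congr rfl fun j _ => by rw [← intervalIntegral.integral_mul_const]
      calc ∑ i, h i * ((fun j => (Matrix.of fun i j =>
              ∫ τ in s..T, ((P τ)ᵀ * K τ * P τ) i j) i j) ⬝ᵥ h)
          = ∑ i, ∫ τ in s..T, h i * ∑ j, ((P τ)ᵀ * K τ * P τ) i j * h j := by
            refine Finset.sum_congr rfl fun i _ => ?_
            simp only [dotProduct, Matrix.of_apply]
            rw [step1, ← intervalIntegral.integral_const_mul]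
        _ = ∫ τ in s..T, ∑ i, h i * ∑ j, ((P τ)ᵀ * K τ * P τ) i j * h j := by
            rw [intervalIntegral.integral_finset_sum (fun i _ => hint2 i)]
        _ = ∫ τ in s..T, f τ := by
            congr 1
    rw [hLHS, hintf]
    have hqs : q s = h ⬝ᵥ B⁻¹ *ᵥ h := by
      simp [hq, hg, hPs, Matrix.one_mulVec]
    have hqT : q T = (P T *ᵥ h) ⬝ᵥ B⁻¹ *ᵥ (P T *ᵥ h) := rfl
    rw [hqs, hqT]; ring
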